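/- The quadratic Euler sum Σ_{n=1}^∞ (H_n / n)² equals 17 ζ(4) / 4, where H_n = Σ_{k=1}^n find 1/k is the n-th harmonic number. -/

import Mathlib

open scoped ENNReal NNReal
open Filter Finset


open MeasureTheory

/-- Polylogarithm `Li n x = ∑_{k ≥ 1} x^k / k^n` (for an integer index `n`). -/
noncomputable def Li (n : ℤ) (x : ℝ) : ℝ := ∑' k : ℕ+, x ^ (k : ℕ) / ((k : ℕ) : ℝ) ^ n

/-- Zeta value `ζ(n) = ∑_{k ≥ 1} 1 / k^n` (equals `0` at `n = 1` by divergence). -/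
noncomputable def zetaR (n : ℕ) : ℝ := ∑' k : ℕ+, 1 / ((k : ℕ) : ℝ) ^ n

/-- The set of zeta values at integers `n ≥ 2`. -/
def zetaValues : Set ℝ := {x : ℝ | ∃ n : ℕ, 2 ≤ n ∧ x = zetaR n}

noncomputable section EulerSum17

/-- real harmonic number -/
def Hr (n : ℕ) : ℝ := ∑ k ∈ Finset.Icc 1 n, (1:ℝ)/k
/-- real H^{(2)} -/
def Qr (n : ℕ) : ℝ := ∑ k ∈ Finset.Icc 1 n, (1:ℝ)/(k:ℝ)^2

lemma Hr_zero : Hr 0 = 0 := by simp [Hr]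
lemma Qr_zero : Qr 0 = 0 := by simp [Qr]
lemma Hr_succ (n : ℕ) : Hr (n+1) = Hr n + 1/(n+1) := by
  rw [Hr, Hr, Finset.sum_Icc_succ_top (by omega)]; push_cast; ring_nf
lemma Qr_succ (n : ℕ) : Qr (n+1) = Qr n + 1/((n:ℝ)+1)^2 := by
  rw [Qr, Qr, Finset.sum_Icc_succ_top (by omega)]; push_cast; ring_nf
lemma Hr_nonneg (n : ℕ) : 0 ≤ Hr n := by
  apply Finset.sum_nonneg; intro k _; positivity
lemma Qr_nonneg (n : ℕ) : 0 ≤ Qr n := by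
  apply Finset.sum_nonneg; intro k _; positivity
lemma Hr_one : Hr 1 = 1 := by rw [show (1:ℕ) = 0+1 from rfl, Hr_succ, Hr_zero]; norm_num
lemma Qr_one : Qr 1 = 1 := by rw [show (1:ℕ) = 0+1 from rfl, Qr_succ, Qr_zero]; norm_num

/-- ENNReal atom -/
def E (k : ℕ) : ℝ≥0∞ := ((k:ℝ≥0∞))⁻¹
def hE (n : ℕ) : ℝ≥0∞ := ENNReal.ofReal (Hr n)
def qE (n : ℕ) : ℝ≥0∞ := ENNReal.ofReal (Qr n)

lemma E_eq_ofReal (k : ℕ) (hk : 0 < k) : E k = ENNReal.ofReal (1/(k:ℝ)) := by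
  rw [E, one_div, ENNReal.ofReal_inv_of_pos (by exact_mod_cast hk), ENNReal.ofReal_natCast]

lemma E_ne_top (k : ℕ) (hk : 0 < k) : E k ≠ ∞ := by
  simp [E]; omega
lemma hE_ne_top (n : ℕ) : hE n ≠ ∞ := ENNReal.ofReal_ne_top
lemma qE_ne_top (n : ℕ) : qE n ≠ ∞ := ENNReal.ofReal_ne_top
lemma E_one : E 1 = 1 := by simp [E]
lemma hE_one : hE 1 = 1 := by simp [hE, Hr_one]
lemma qE_one : qE 1 = 1 := by simp [qE, Qr_one]



/-- Triangle regrouping: `∑_k ∑_n Φ k (k+n) = ∑_j ∑_{k ≤ j} Φ k j`. -/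
lemma triangle (Φ : ℕ → ℕ → ℝ≥0∞) :
    ∑' (k:ℕ) (n:ℕ), Φ k (k+n) = ∑' (j:ℕ), ∑ k ∈ Finset.range (j+1), Φ k j := by
  set g : ℕ×ℕ → ℝ≥0∞ := fun q => if q.1 ≤ q.2 then Φ q.1 q.2 else 0 with hg
  have hi : Function.Injective (fun p : ℕ×ℕ => (p.1, p.1+p.2)) := by
    rintro ⟨a,b⟩ ⟨c,d⟩ h
    simp only [Prod.mk.injEq] at h
    obtain ⟨h1, h2⟩ := h; subst h1; simp at h2 ⊢; omega
  have hsupp : Function.support g ⊆ Set.range (fun p : ℕ×ℕ => (p.1, p.1+p.2)) := by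
    rintro ⟨a,b⟩ hq
    simp only [Function.mem_support, hg] at hq
    by_cases h : a ≤ b
    · exact ⟨(a, b-a), by simp; omega⟩
    · simp [h] at hq
  have key := Function.Injective.tsum_eq hi (f := g) hsupp
  have lhs_eq : ∑' (k:ℕ) (n:ℕ), Φ k (k+n) = ∑' p : ℕ×ℕ, g ((p.1, p.1+p.2)) := by
    rw [ENNReal.tsum_prod']
    congr 1; ext k; congr 1; ext n
    simp [hg]
  rw [lhs_eq, key, ENNReal.tsum_prod', ENNReal.tsum_comm]
  congr 1; ext j
  rw [tsum_eq_sum (s := Finset.range (j+1)) (by intro k hk; simp at hk; simp [hg]; omega)]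
  apply Finset.sum_congr rfl
  intro k hk; simp at hk; simp [hg]; omega

lemma sum_range_one_div (N : ℕ) : ∑ n ∈ Finset.range N, 1/((n:ℝ)+1) = Hr N := by
  induction N with
  | zero => simp [Hr_zero]
  | succ N ih => rw [Finset.sum_range_succ, ih, Hr_succ]

lemma sum_range_shift (m N : ℕ) :
    ∑ n ∈ Finset.range N, 1/((n:ℝ)+(m:ℝ)+2) = Hr (N+m+1) - Hr (m+1) := by
  induction N with
  | zero => simp
  | succ N ih =>
    have h2 : Hr (N+1+m+1) = Hr (N+m+1) + 1/(((N+m+1:ℕ):ℝ)+1) := by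
      rw [show N+1+m+1 = (N+m+1)+1 by omega, Hr_succ]
    rw [Finset.sum_range_succ, ih, h2]; push_cast; ring

lemma Hr_diff_le (N m : ℕ) : Hr (N+m+1) - Hr N ≤ ((m:ℝ)+1)/((N:ℝ)+1) := by
  induction m with
  | zero =>
    rw [show N+0+1 = N+1 by omega, Hr_succ]; push_cast
    have h : (0:ℝ) < (N:ℝ)+1 := by positivity
    rw [zero_add]; rw [add_sub_cancel_left]
  | succ m ih =>
    rw [show N+(m+1)+1 = (N+m+1)+1 by omega, Hr_succ]
    have h1 : 1/((N:ℝ)+(m:ℝ)+1+1) ≤ 1/((N:ℝ)+1) := by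
      apply one_div_le_one_div_of_le <;> [positivity; nlinarith]
    push_cast at ih ⊢
    have : ((m:ℝ)+1)/((N:ℝ)+1) + 1/((N:ℝ)+1) = ((m:ℝ)+1+1)/((N:ℝ)+1) := by ring
    linarith

lemma summable_shift (m : ℕ) :
    Summable (fun n : ℕ => 1/(((n:ℝ)+1)*((n:ℝ)+(m:ℝ)+2))) := by
  have h2 : Summable (fun n:ℕ => 1/((n:ℝ)+1)^2) := by
    have := Real.summable_one_div_nat_pow.mpr (le_refl 2)
    have := (summable_nat_add_iff 1).mpr this
    apply this.congr; intro n; push_cast; ring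
  apply Summable.of_nonneg_of_le (fun n => by positivity) _ h2
  intro n
  apply div_le_div_of_nonneg_left (by norm_num) (by positivity)
  nlinarith [Nat.cast_nonneg (α := ℝ) n, Nat.cast_nonneg (α := ℝ) m]

lemma telescope_hasSum (m : ℕ) :
    HasSum (fun n : ℕ => 1/(((n:ℝ)+1)*((n:ℝ)+(m:ℝ)+2))) (Hr (m+1)/((m:ℝ)+1)) := by
  rw [(summable_shift m).hasSum_iff_tendsto_nat]
  have hps : ∀ N, ∑ n ∈ Finset.range N, 1/(((n:ℝ)+1)*((n:ℝ)+(m:ℝ)+2))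
      = (Hr (m+1) - (Hr (N+m+1) - Hr N))/((m:ℝ)+1) := by
    intro N
    have : ∀ n : ℕ, 1/(((n:ℝ)+1)*((n:ℝ)+(m:ℝ)+2))
        = (1/((n:ℝ)+1) - 1/((n:ℝ)+(m:ℝ)+2))/((m:ℝ)+1) := by
      intro n
      have h1 : (0:ℝ) < (n:ℝ)+1 := by positivity
      have h2 : (0:ℝ) < (n:ℝ)+(m:ℝ)+2 := by positivity
      have h3 : (0:ℝ) < (m:ℝ)+1 := by positivity
      field_simp
      ring
    simp_rw [this, ← Finset.sum_div, Finset.sum_sub_distrib, sum_range_one_div, sum_range_shift]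
    ring_nf
  simp_rw [hps]
  have h0 : Tendsto (fun N : ℕ => Hr (N+m+1) - Hr N) atTop (nhds 0) := by
    apply squeeze_zero (fun N => by
      have : Hr N ≤ Hr (N+m+1) := by
        clear hps
        induction m with
        | zero =>
          rw [show N+0+1 = N+1 by omega, Hr_succ]
          have : (0:ℝ) ≤ 1/((N:ℝ)+1) := by positivity
          linarith
        | succ m ih =>
          rw [show N+(m+1)+1 = (N+m+1)+1 by omega, Hr_succ]
          have : (0:ℝ) ≤ 1/(((N+m+1:ℕ):ℝ)+1) := by positivity
          linarith
      linarith) (fun N => Hr_diff_le N m)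
    have : Tendsto (fun N : ℕ => ((m:ℝ)+1) * (1/((N:ℝ)+1))) atTop (nhds (((m:ℝ)+1) * 0)) := by
      apply Tendsto.const_mul
      exact tendsto_one_div_add_atTop_nhds_zero_nat
    simp only [mul_zero] at this
    apply this.congr; intro N; ring
  have : Tendsto (fun N : ℕ => (Hr (m+1) - (Hr (N+m+1) - Hr N))/((m:ℝ)+1)) atTop
      (nhds ((Hr (m+1) - 0)/((m:ℝ)+1))) := by
    apply Tendsto.div_const
    exact (tendsto_const_nhds).sub h0
  simpa using this


lemma E_sh (k : ℕ) : E (k+1) = ENNReal.ofReal (1/((k:ℝ)+1)) := by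
  rw [E_eq_ofReal (k+1) (by omega)]; push_cast; rfl

lemma E_toReal (k : ℕ) : (E k).toReal = 1/(k:ℝ) := by
  rw [E, ENNReal.toReal_inv, one_div]
  norm_num

lemma hE_toReal (n : ℕ) : (hE n).toReal = Hr n := ENNReal.toReal_ofReal (Hr_nonneg n)
lemma qE_toReal (n : ℕ) : (qE n).toReal = Qr n := ENNReal.toReal_ofReal (Qr_nonneg n)

lemma Ecomm (m n : ℕ) : E (m+n+2) = E (n+m+2) := by rw [Nat.add_comm m n]

lemma E1 (m : ℕ) : ∑' n:ℕ, E (n+1) * E (n+m+2) = hE (m+1) * E (m+1) := by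
  have ht : ∀ n:ℕ, E (n+1) * E (n+m+2) = ENNReal.ofReal (1/(((n:ℝ)+1)*((n:ℝ)+(m:ℝ)+2))) := by
    intro n
    rw [E_sh n, show n+m+2 = (n+m+1)+1 by omega, E_sh (n+m+1),
      ← ENNReal.ofReal_mul (by positivity)]
    congr 1
    push_cast
    rw [div_mul_div_comm, one_mul]
    ring_nf
  simp_rw [ht]
  rw [← ENNReal.ofReal_tsum_of_nonneg (fun n => by positivity) (summable_shift m),
      (telescope_hasSum m).tsum_eq]
  rw [hE, E_sh m, ← ENNReal.ofReal_mul (Hr_nonneg _)]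
  congr 1
  rw [mul_one_div]

lemma Efin (k : ℕ) : E (k+1) ≠ ∞ := E_ne_top _ (by omega)

lemma pf1 (a b : ℕ) : E (a+1) * E (b+1) * E (a+b+2)
    = E (a+1) * E (a+b+2)^2 + E (b+1) * E (a+b+2)^2 := by
  have fa : E (a+1) ≠ ⊤ := Efin a
  have fb : E (b+1) ≠ ⊤ := Efin b
  have fc : E (a+b+2) ≠ ⊤ := by rw [show a+b+2 = (a+b+1)+1 by omega]; exact Efin (a+b+1)
  have hL : E (a+1) * E (b+1) * E (a+b+2) ≠ ⊤ := ENNReal.mul_ne_top (ENNReal.mul_ne_top fa fb) fc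
  have h1 : E (a+1) * E (a+b+2)^2 ≠ ⊤ := ENNReal.mul_ne_top fa (ENNReal.pow_ne_top fc)
  have h2 : E (b+1) * E (a+b+2)^2 ≠ ⊤ := ENNReal.mul_ne_top fb (ENNReal.pow_ne_top fc)
  rw [← ENNReal.toReal_eq_toReal_iff' hL (ENNReal.add_ne_top.mpr ⟨h1, h2⟩)]
  rw [ENNReal.toReal_add h1 h2]
  simp only [ENNReal.toReal_mul, ENNReal.toReal_pow, E_toReal]
  have ha : (0:ℝ) < (a:ℝ)+1 := by positivity
  have hb : (0:ℝ) < (b:ℝ)+1 := by positivity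
  push_cast
  rw [div_pow]
  field_simp
  ring

lemma pf2 (a b : ℕ) : E (a+1)^2 * E (b+1)^2
    = E (a+1)^2 * E (a+b+2)^2 + E (b+1)^2 * E (a+b+2)^2
      + 2 * (E (a+1) * E (b+1) * E (a+b+2)^2) := by
  have fa : E (a+1) ≠ ⊤ := Efin a
  have fb : E (b+1) ≠ ⊤ := Efin b
  have fc : E (a+b+2) ≠ ⊤ := by rw [show a+b+2 = (a+b+1)+1 by omega]; exact Efin (a+b+1)
  have hL : E (a+1)^2 * E (b+1)^2 ≠ ⊤ :=
    ENNReal.mul_ne_top (ENNReal.pow_ne_top fa) (ENNReal.pow_ne_top fb)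
  have h1 : E (a+1)^2 * E (a+b+2)^2 ≠ ⊤ :=
    ENNReal.mul_ne_top (ENNReal.pow_ne_top fa) (ENNReal.pow_ne_top fc)
  have h2 : E (b+1)^2 * E (a+b+2)^2 ≠ ⊤ :=
    ENNReal.mul_ne_top (ENNReal.pow_ne_top fb) (ENNReal.pow_ne_top fc)
  have h3 : (2:ℝ≥0∞) * (E (a+1) * E (b+1) * E (a+b+2)^2) ≠ ⊤ :=
    ENNReal.mul_ne_top (by norm_num)
      (ENNReal.mul_ne_top (ENNReal.mul_ne_top fa fb) (ENNReal.pow_ne_top fc))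
  rw [← ENNReal.toReal_eq_toReal_iff' hL (ENNReal.add_ne_top.mpr
    ⟨ENNReal.add_ne_top.mpr ⟨h1, h2⟩, h3⟩)]
  rw [ENNReal.toReal_add (ENNReal.add_ne_top.mpr ⟨h1, h2⟩) h3, ENNReal.toReal_add h1 h2]
  simp only [ENNReal.toReal_mul, ENNReal.toReal_pow, E_toReal, ENNReal.toReal_ofNat]
  have ha : (0:ℝ) < (a:ℝ)+1 := by positivity
  have hb : (0:ℝ) < (b:ℝ)+1 := by positivity
  push_cast
  rw [div_pow, div_pow, div_pow]
  field_simp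
  ring

lemma pf3 (a b : ℕ) : E (a+1)^2 * E (b+1)^2
    = E (a+1)^2 * E (b+1) * E (a+b+2) + E (a+1) * E (b+1)^2 * E (a+b+2) := by
  have fa : E (a+1) ≠ ⊤ := Efin a
  have fb : E (b+1) ≠ ⊤ := Efin b
  have fc : E (a+b+2) ≠ ⊤ := by rw [show a+b+2 = (a+b+1)+1 by omega]; exact Efin (a+b+1)
  have hL : E (a+1)^2 * E (b+1)^2 ≠ ⊤ :=
    ENNReal.mul_ne_top (ENNReal.pow_ne_top fa) (ENNReal.pow_ne_top fb)
  have h1 : E (a+1)^2 * E (b+1) * E (a+b+2) ≠ ⊤ :=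
    ENNReal.mul_ne_top (ENNReal.mul_ne_top (ENNReal.pow_ne_top fa) fb) fc
  have h2 : E (a+1) * E (b+1)^2 * E (a+b+2) ≠ ⊤ :=
    ENNReal.mul_ne_top (ENNReal.mul_ne_top fa (ENNReal.pow_ne_top fb)) fc
  rw [← ENNReal.toReal_eq_toReal_iff' hL (ENNReal.add_ne_top.mpr ⟨h1, h2⟩)]
  rw [ENNReal.toReal_add h1 h2]
  simp only [ENNReal.toReal_mul, ENNReal.toReal_pow, E_toReal]
  have ha : (0:ℝ) < (a:ℝ)+1 := by positivity
  have hb : (0:ℝ) < (b:ℝ)+1 := by positivity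
  push_cast
  rw [div_pow, div_pow]
  field_simp
  ring


lemma FI1 (M : ℕ) : 2 * ∑ m ∈ Finset.range M, Hr (m+1)/((m:ℝ)+1) = Hr M^2 + Qr M := by
  induction M with
  | zero => simp [Hr_zero, Qr_zero]
  | succ M ih =>
    rw [Finset.sum_range_succ, mul_add, ih, Hr_succ, Qr_succ,
      show (1:ℝ)/(((M:ℝ))+1)^2 = (1/((M:ℝ)+1))^2 by rw [div_pow, one_pow]]
    ring

lemma FI4 (M : ℕ) : 2 * ∑ s ∈ Finset.range M, Hr (s+1)/((s:ℝ)+2) + Qr (M+1) = Hr (M+1)^2 := by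
  induction M with
  | zero => simp [Hr_one, Qr_one]
  | succ M ih =>
    rw [Finset.sum_range_succ, mul_add]
    have hq : Qr (M+2) = Qr (M+1) + 1/(((M+1:ℕ):ℝ)+1)^2 := Qr_succ (M+1)
    have hh : Hr (M+2) = Hr (M+1) + 1/(((M+1:ℕ):ℝ)+1) := Hr_succ (M+1)
    push_cast at hq hh
    rw [show M+1+1 = M+2 by omega, hq, hh]
    push_cast
    rw [show (1:ℝ)/(((M:ℝ))+1+1)^2 = (1/((M:ℝ)+1+1))^2 by rw [div_pow, one_pow]]
    linear_combination ih

lemma FI3 (s : ℕ) : ∑ k ∈ Finset.range (s+1), (1/((k:ℝ)+1)) * (1/(((s-k:ℕ):ℝ)+1))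
    = 2 * Hr (s+1)/((s:ℝ)+2) := by
  have hterm : ∀ k ∈ Finset.range (s+1), (1/((k:ℝ)+1)) * (1/(((s-k:ℕ):ℝ)+1))
      = (1/((s:ℝ)+2)) * (1/((k:ℝ)+1) + 1/(((s-k:ℕ):ℝ)+1)) := by
    intro k hk
    simp only [Finset.mem_range] at hk
    have hks : k ≤ s := by omega
    rw [Nat.cast_sub hks]
    have h1 : (0:ℝ) < (k:ℝ)+1 := by positivity
    have h2 : (0:ℝ) < (s:ℝ)-(k:ℝ)+1 := by
      have : (k:ℝ) ≤ (s:ℝ) := by exact_mod_cast hks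
      linarith
    field_simp
    ring
  rw [Finset.sum_congr rfl hterm, ← Finset.mul_sum, Finset.sum_add_distrib]
  have hrefl : ∑ k ∈ Finset.range (s+1), (1:ℝ)/(((s-k:ℕ):ℝ)+1)
      = ∑ k ∈ Finset.range (s+1), (1:ℝ)/((k:ℝ)+1) := by
    rw [← Finset.sum_range_reflect (fun j => (1:ℝ)/((j:ℝ)+1)) (s+1)]
    apply Finset.sum_congr rfl
    intro k hk
    norm_num
  rw [hrefl, sum_range_one_div]
  ring

lemma sum_range_one_div_sq (N : ℕ) : ∑ n ∈ Finset.range N, (1/((n:ℝ)+1))^2 = Qr N := by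
  induction N with
  | zero => simp [Qr_zero]
  | succ N ih =>
    rw [Finset.sum_range_succ, ih, Qr_succ, div_pow, one_pow]

lemma hE_succ (n : ℕ) : hE (n+1) = hE n + E (n+1) := by
  rw [hE, hE, Hr_succ, ENNReal.ofReal_add (Hr_nonneg n) (by positivity), E_sh]

lemma qE_succ (n : ℕ) : qE (n+1) = qE n + E (n+1)^2 := by
  rw [qE, qE, Qr_succ, ENNReal.ofReal_add (Qr_nonneg n) (by positivity), E_sh,
    ← ENNReal.ofReal_pow (by positivity), div_pow, one_pow]

lemma hE_sum (n : ℕ) : hE n = ∑ k ∈ Finset.range n, E (k+1) := by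
  induction n with
  | zero => simp [hE, Hr_zero]
  | succ n ih => rw [hE_succ, Finset.sum_range_succ, ih]

lemma sum_q (j : ℕ) : ∑ m ∈ Finset.range (j+1), E (m+1)^2 = qE (j+1) := by
  have : ∀ m ∈ Finset.range (j+1), E (m+1)^2 = ENNReal.ofReal ((1/((m:ℝ)+1))^2) := by
    intro m _
    rw [E_sh, ← ENNReal.ofReal_pow (by positivity)]
  rw [Finset.sum_congr rfl this, ← ENNReal.ofReal_sum_of_nonneg (fun i _ => by positivity),
    sum_range_one_div_sq]
  rfl

lemma sum_hE_E (j : ℕ) : ∑ m ∈ Finset.range (j+1), hE (m+1) * E (m+1)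
    = ENNReal.ofReal ((Hr (j+1)^2 + Qr (j+1))/2) := by
  have : ∀ m ∈ Finset.range (j+1), hE (m+1) * E (m+1)
      = ENNReal.ofReal (Hr (m+1)/((m:ℝ)+1)) := by
    intro m _
    rw [hE, E_sh, ← ENNReal.ofReal_mul (Hr_nonneg _), mul_one_div]
  rw [Finset.sum_congr rfl this, ← ENNReal.ofReal_sum_of_nonneg
    (fun i _ => div_nonneg (Hr_nonneg _) (by positivity))]
  congr 1
  have := FI1 (j+1)
  linarith

lemma sum_hE_E2 (j : ℕ) : ∑ s ∈ Finset.range (j+1), hE (s+1) * E (s+2)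
    = ENNReal.ofReal ((Hr (j+2)^2 - Qr (j+2))/2) := by
  have : ∀ s ∈ Finset.range (j+1), hE (s+1) * E (s+2)
      = ENNReal.ofReal (Hr (s+1)/((s:ℝ)+2)) := by
    intro s _
    rw [hE, show s+2 = (s+1)+1 by omega, E_sh (s+1), ← ENNReal.ofReal_mul (Hr_nonneg _),
      mul_one_div]
    congr 2
    push_cast
    ring
  rw [Finset.sum_congr rfl this, ← ENNReal.ofReal_sum_of_nonneg
    (fun i _ => div_nonneg (Hr_nonneg _) (by positivity))]
  congr 1
  have := FI4 (j+1)
  rw [show j+1+1 = j+2 by omega] at this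
  linarith

lemma sum_ADe (s : ℕ) : ∑ k ∈ Finset.range (s+1), E (k+1) * E (s-k+1)
    = 2 * (hE (s+1) * E (s+2)) := by
  have : ∀ k ∈ Finset.range (s+1), E (k+1) * E (s-k+1)
      = ENNReal.ofReal ((1/((k:ℝ)+1)) * (1/(((s-k:ℕ):ℝ)+1))) := by
    intro k _
    rw [E_sh k, E_sh (s-k), ← ENNReal.ofReal_mul (by positivity)]
  rw [Finset.sum_congr rfl this, ← ENNReal.ofReal_sum_of_nonneg (fun i _ => by positivity),
    FI3]
  have hsr : (2:ℝ) * Hr (s+1)/((s:ℝ)+2) = 2 * (Hr (s+1) * (1/(((s+1:ℕ):ℝ)+1))) := by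
    push_cast; ring
  rw [hsr, ENNReal.ofReal_mul (by norm_num), ENNReal.ofReal_mul (Hr_nonneg _),
    ENNReal.ofReal_ofNat]
  rw [hE, show E (s+2) = ENNReal.ofReal (1/(((s+1:ℕ):ℝ)+1)) from E_sh (s+1)]


def Z2 : ℝ≥0∞ := ∑' n:ℕ, E (n+1)^2
def Z4 : ℝ≥0∞ := ∑' n:ℕ, E (n+1)^4
def SA : ℝ≥0∞ := ∑' n:ℕ, hE (n+1) * E (n+1)^3
def SA' : ℝ≥0∞ := ∑' n:ℕ, hE n * E (n+1)^3
def SC : ℝ≥0∞ := ∑' n:ℕ, qE (n+1) * E (n+1)^2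
def SC' : ℝ≥0∞ := ∑' n:ℕ, qE n * E (n+1)^2
def SSum : ℝ≥0∞ := ∑' n:ℕ, hE (n+1)^2 * E (n+1)^2
def SS' : ℝ≥0∞ := ∑' n:ℕ, hE n^2 * E (n+1)^2

lemma SC'_shift : SC' = ∑' j:ℕ, qE (j+1) * E (j+2)^2 := by
  rw [SC', tsum_eq_zero_add' ENNReal.summable]
  have h0 : qE 0 = 0 := by simp [qE, Qr_zero]
  rw [h0, zero_mul, zero_add]

lemma SA'_shift : SA' = ∑' j:ℕ, hE (j+1) * E (j+2)^3 := by
  rw [SA', tsum_eq_zero_add' ENNReal.summable]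
  have h0 : hE 0 = 0 := by simp [hE, Hr_zero]
  rw [h0, zero_mul, zero_add]

lemma SS'_shift : SS' = ∑' j:ℕ, hE (j+1)^2 * E (j+2)^2 := by
  rw [SS', tsum_eq_zero_add' ENNReal.summable]
  have h0 : hE 0 = 0 := by simp [hE, Hr_zero]
  rw [h0]
  norm_num

lemma SSum_shift : SSum = 1 + ∑' j:ℕ, hE (j+2)^2 * E (j+2)^2 := by
  rw [SSum, tsum_eq_zero_add' ENNReal.summable, hE_one, E_one]
  norm_num

lemma SC_shift : SC = 1 + ∑' j:ℕ, qE (j+2) * E (j+2)^2 := by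
  rw [SC, tsum_eq_zero_add' ENNReal.summable, qE_one, E_one]
  norm_num

lemma Z2sq : Z2 * Z2 = ∑' (m:ℕ) (n:ℕ), E (m+1)^2 * E (n+1)^2 := by
  rw [Z2, ← ENNReal.tsum_mul_right]
  apply tsum_congr; intro m
  rw [ENNReal.tsum_mul_left]

lemma tsum_shift_ite (m : ℕ) (g : ℕ → ℝ≥0∞) :
    ∑' n:ℕ, (if m < n then g n else 0) = ∑' d:ℕ, g (m+d+1) := by
  have hi : Function.Injective (fun d:ℕ => m+d+1) := by intro a b h; simpa using h
  have hs : Function.support (fun n => if m < n then g n else 0)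
      ⊆ Set.range (fun d:ℕ => m+d+1) := by
    intro n hn
    simp only [Function.mem_support] at hn
    by_cases h : m < n
    · exact ⟨n - m - 1, show m+(n-m-1)+1 = n by omega⟩
    · simp [h] at hn
  rw [← Function.Injective.tsum_eq hi hs]
  apply tsum_congr; intro d
  rw [if_pos (by omega)]

lemma strictTriangle (g : ℕ → ℕ → ℝ≥0∞) :
    ∑' (m:ℕ) (n:ℕ), (if m < n then g m n else 0)
      = ∑' j:ℕ, ∑ m ∈ Finset.range (j+1), g m (j+1) := by
  have h1 : ∀ m:ℕ, ∑' n:ℕ, (if m < n then g m n else 0) = ∑' d:ℕ, g m (m+d+1) :=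
    fun m => tsum_shift_ite m (g m)
  rw [tsum_congr h1]
  exact triangle (fun m j => g m (j+1))

lemma pieceSA : ∑' (m:ℕ) (n:ℕ), E (m+1)^2 * E (n+1) * E (m+n+2) = SA := by
  apply tsum_congr; intro m
  have h1 : ∀ n:ℕ, E (m+1)^2 * E (n+1) * E (m+n+2)
      = E (m+1)^2 * (E (n+1) * E (n+m+2)) := by
    intro n; rw [Ecomm]; ring
  rw [tsum_congr h1, ENNReal.tsum_mul_left, E1]
  ring

lemma F5 : Z2 * Z2 = 2 * SA := by
  rw [Z2sq]
  have h1 : ∀ m:ℕ, ∑' n:ℕ, E (m+1)^2 * E (n+1)^2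
      = ∑' n:ℕ, (E (m+1)^2 * E (n+1) * E (m+n+2) + E (m+1) * E (n+1)^2 * E (m+n+2)) := by
    intro m; apply tsum_congr; intro n
    rw [← pf3]
  rw [tsum_congr h1]
  simp only [ENNReal.tsum_add]
  have hA : ∑' (m:ℕ) (n:ℕ), E (m+1)^2 * E (n+1) * E (m+n+2) = SA := pieceSA
  have hB : ∑' (m:ℕ) (n:ℕ), E (m+1) * E (n+1)^2 * E (m+n+2) = SA := by
    rw [ENNReal.tsum_comm]
    have : ∀ n m : ℕ, E (m+1) * E (n+1)^2 * E (m+n+2) = E (n+1)^2 * E (m+1) * E (n+m+2) := by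
      intro n m; rw [Ecomm]; ring
    calc ∑' (n:ℕ) (m:ℕ), E (m+1) * E (n+1)^2 * E (m+n+2)
        = ∑' (n:ℕ) (m:ℕ), E (n+1)^2 * E (m+1) * E (n+m+2) := by
          apply tsum_congr; intro n; apply tsum_congr; intro m; exact this n m
      _ = SA := pieceSA
  rw [hA, hB, two_mul]

lemma ite_mul_triangle_SC' (X : ℕ → ℕ → ℝ≥0∞)
    (hX : ∀ m n, X m n = E (m+1)^2 * E (n+1)^2) :
    ∑' (m:ℕ) (n:ℕ), (if m < n then X m n else 0) = SC' := by
  have h1 : ∀ m n, (if m < n then X m n else 0)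
      = (if m < n then E (m+1)^2 * E (n+1)^2 else 0) := by
    intro m n; rw [hX]
  calc ∑' (m:ℕ) (n:ℕ), (if m < n then X m n else 0)
      = ∑' (m:ℕ) (n:ℕ), (if m < n then E (m+1)^2 * E (n+1)^2 else 0) := by
        apply tsum_congr; intro m; apply tsum_congr; intro n; exact h1 m n
    _ = ∑' j:ℕ, ∑ m ∈ Finset.range (j+1), E (m+1)^2 * E (j+2)^2 :=
        strictTriangle (fun m n => E (m+1)^2 * E (n+1)^2)
    _ = ∑' j:ℕ, qE (j+1) * E (j+2)^2 := by
        apply tsum_congr; intro j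
        rw [← Finset.sum_mul, sum_q]
    _ = SC' := SC'_shift.symm

lemma F6 : Z2 * Z2 = 2 * SC' + Z4 := by
  rw [Z2sq]
  have split : ∀ m n : ℕ, E (m+1)^2 * E (n+1)^2
      = (if m < n then E (m+1)^2 * E (n+1)^2 else 0)
        + ((if n < m then E (m+1)^2 * E (n+1)^2 else 0)
        + (if n = m then E (m+1)^2 * E (n+1)^2 else 0)) := by
    intro m n
    rcases lt_trichotomy m n with h|h|h
    · rw [if_pos h, if_neg (by omega), if_neg (by omega)]; simp
    · rw [if_neg (by omega), if_neg (by omega), if_pos h.symm]; simp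
    · rw [if_neg (by omega), if_pos h, if_neg (by omega)]; simp
  have hsplit : ∑' (m:ℕ) (n:ℕ), E (m+1)^2 * E (n+1)^2
      = ∑' (m:ℕ) (n:ℕ), ((if m < n then E (m+1)^2 * E (n+1)^2 else 0)
        + ((if n < m then E (m+1)^2 * E (n+1)^2 else 0)
        + (if n = m then E (m+1)^2 * E (n+1)^2 else 0))) := by
    apply tsum_congr; intro m; apply tsum_congr; intro n; exact split m n
  rw [hsplit]
  simp only [ENNReal.tsum_add]
  have hT1 : ∑' (m:ℕ) (n:ℕ), (if m < n then E (m+1)^2 * E (n+1)^2 else 0) = SC' :=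
    ite_mul_triangle_SC' _ (fun _ _ => rfl)
  have hT2 : ∑' (m:ℕ) (n:ℕ), (if n < m then E (m+1)^2 * E (n+1)^2 else 0) = SC' := by
    rw [ENNReal.tsum_comm]
    exact ite_mul_triangle_SC' (fun n m => E (m+1)^2 * E (n+1)^2) (fun n m => by ring)
  have hT3 : ∑' (m:ℕ) (n:ℕ), (if n = m then E (m+1)^2 * E (n+1)^2 else 0) = Z4 := by
    apply tsum_congr; intro m
    rw [tsum_eq_single m (fun n hn => if_neg hn), if_pos rfl]
    ring
  rw [hT1, hT2, hT3, two_mul, add_assoc]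


lemma sumSC' : ∑' j:ℕ, ∑ m ∈ Finset.range (j+1), E (m+1)^2 * E (j+2)^2 = SC' := by
  rw [SC'_shift]
  apply tsum_congr; intro j
  rw [← Finset.sum_mul, sum_q]

lemma F7 : Z2 * Z2 = 2 * SC' + 4 * SA' := by
  rw [Z2sq]
  have h1 : ∀ m:ℕ, ∑' n:ℕ, E (m+1)^2 * E (n+1)^2
      = ∑' n:ℕ, (E (m+1)^2 * E (m+n+2)^2 + (E (n+1)^2 * E (m+n+2)^2
          + 2 * (E (m+1) * E (n+1) * E (m+n+2)^2))) := by
    intro m; apply tsum_congr; intro n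
    rw [pf2 m n]; ring
  rw [tsum_congr h1]
  simp only [ENNReal.tsum_add]
  have hU1 : ∑' (m:ℕ) (n:ℕ), E (m+1)^2 * E (m+n+2)^2 = SC' := by
    rw [triangle (fun m j => E (m+1)^2 * E (j+2)^2)]
    exact sumSC'
  have hU2 : ∑' (m:ℕ) (n:ℕ), E (n+1)^2 * E (m+n+2)^2 = SC' := by
    rw [ENNReal.tsum_comm]
    have h2 : ∀ n:ℕ, ∑' m:ℕ, E (n+1)^2 * E (m+n+2)^2 = ∑' m:ℕ, E (n+1)^2 * E (n+m+2)^2 := by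
      intro n; apply tsum_congr; intro m; rw [Ecomm]
    rw [tsum_congr h2, triangle (fun n j => E (n+1)^2 * E (j+2)^2)]
    exact sumSC'
  have hU3 : ∑' (m:ℕ) (n:ℕ), 2 * (E (m+1) * E (n+1) * E (m+n+2)^2) = 4 * SA' := by
    have h3 : ∀ m:ℕ, ∑' n:ℕ, 2 * (E (m+1) * E (n+1) * E (m+n+2)^2)
        = 2 * ∑' n:ℕ, E (m+1) * E (n+1) * E (m+n+2)^2 := fun m => ENNReal.tsum_mul_left
    rw [tsum_congr h3, ENNReal.tsum_mul_left]
    have h4 : ∀ m n : ℕ, E (m+1) * E (n+1) * E (m+n+2)^2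
        = E (m+1) * E ((m+n)-m+1) * E ((m+n)+2)^2 := by
      intro m n; rw [Nat.add_sub_cancel_left]
    have h5 : ∑' (m:ℕ) (n:ℕ), E (m+1) * E (n+1) * E (m+n+2)^2 = 2 * SA' := by
      calc ∑' (m:ℕ) (n:ℕ), E (m+1) * E (n+1) * E (m+n+2)^2
          = ∑' (m:ℕ) (n:ℕ), E (m+1) * E ((m+n)-m+1) * E ((m+n)+2)^2 := by
            apply tsum_congr; intro m; apply tsum_congr; intro n; exact h4 m n
        _ = ∑' j:ℕ, ∑ m ∈ Finset.range (j+1), E (m+1) * E (j-m+1) * E (j+2)^2 :=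
            triangle (fun m j => E (m+1) * E (j-m+1) * E (j+2)^2)
        _ = ∑' j:ℕ, 2 * (hE (j+1) * E (j+2)) * E (j+2)^2 := by
            apply tsum_congr; intro j
            rw [← Finset.sum_mul, sum_ADe]
        _ = 2 * SA' := by
            rw [SA'_shift, ← ENNReal.tsum_mul_left]
            apply tsum_congr; intro j
            ring
    rw [h5]
    ring
  rw [hU1, hU2, hU3, two_mul]
  ring

def Pd : ℝ≥0∞ := ∑' (m:ℕ) (n:ℕ), hE (m+1) * E (m+1) * E (m+n+2)^2
def Zd : ℝ≥0∞ := ∑' (m:ℕ) (n:ℕ), hE (m+1) * E (n+1) * E (m+n+2)^2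

lemma SSum_eq_PZ : SSum = Pd + Zd := by
  rw [SSum]
  have h1 : ∀ m:ℕ, hE (m+1)^2 * E (m+1)^2
      = ∑' n:ℕ, (hE (m+1) * E (m+1)) * (E (n+1) * E (n+m+2)) := by
    intro m
    rw [ENNReal.tsum_mul_left, E1]
    ring
  have h2 : ∀ m n : ℕ, (hE (m+1) * E (m+1)) * (E (n+1) * E (n+m+2))
      = hE (m+1) * E (m+1) * E (m+n+2)^2 + hE (m+1) * E (n+1) * E (m+n+2)^2 := by
    intro m n
    calc (hE (m+1) * E (m+1)) * (E (n+1) * E (n+m+2))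
        = hE (m+1) * (E (m+1) * E (n+1) * E (m+n+2)) := by rw [← Ecomm]; ring
      _ = hE (m+1) * (E (m+1) * E (m+n+2)^2 + E (n+1) * E (m+n+2)^2) := by rw [pf1]
      _ = hE (m+1) * E (m+1) * E (m+n+2)^2 + hE (m+1) * E (n+1) * E (m+n+2)^2 := by ring
  calc ∑' m:ℕ, hE (m+1)^2 * E (m+1)^2
      = ∑' (m:ℕ) (n:ℕ), ((hE (m+1) * E (m+1)) * (E (n+1) * E (n+m+2))) := tsum_congr h1
    _ = ∑' (m:ℕ) (n:ℕ), (hE (m+1) * E (m+1) * E (m+n+2)^2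
          + hE (m+1) * E (n+1) * E (m+n+2)^2) := by
        apply tsum_congr; intro m; apply tsum_congr; intro n; exact h2 m n
    _ = Pd + Zd := by simp only [ENNReal.tsum_add]; rfl

lemma Pd_eq : 2 * Pd = SS' + SC' := by
  have h1 : Pd = ∑' j:ℕ, ENNReal.ofReal ((Hr (j+1)^2 + Qr (j+1))/2) * E (j+2)^2 := by
    rw [Pd, triangle (fun m j => hE (m+1) * E (m+1) * E (j+2)^2)]
    apply tsum_congr; intro j
    rw [← Finset.sum_mul, sum_hE_E]
  rw [h1, ← ENNReal.tsum_mul_left]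
  have h2 : ∀ j:ℕ, 2 * (ENNReal.ofReal ((Hr (j+1)^2 + Qr (j+1))/2) * E (j+2)^2)
      = hE (j+1)^2 * E (j+2)^2 + qE (j+1) * E (j+2)^2 := by
    intro j
    have : (2:ℝ≥0∞) * ENNReal.ofReal ((Hr (j+1)^2 + Qr (j+1))/2)
        = hE (j+1)^2 + qE (j+1) := by
      rw [← ENNReal.ofReal_ofNat, ← ENNReal.ofReal_mul (by norm_num),
        show (2:ℝ) * ((Hr (j+1)^2 + Qr (j+1))/2) = Hr (j+1)^2 + Qr (j+1) by ring,
        ENNReal.ofReal_add (by positivity) (Qr_nonneg _), hE, qE,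
        ← ENNReal.ofReal_pow (Hr_nonneg _)]
    rw [← mul_assoc, this, add_mul]
  rw [tsum_congr h2]
  simp only [ENNReal.tsum_add]
  rw [SS'_shift, SC'_shift]

def tTail (s : ℕ) : ℝ≥0∞ := ∑' d:ℕ, E (s+d)^2

lemma Zd_eq : Zd = ∑' j:ℕ, ENNReal.ofReal (Hr (j+2)^2 - Qr (j+2)) * E (j+2)^2 := by
  rw [Zd, ENNReal.tsum_comm]
  have hB : ∀ n:ℕ, ∑' m:ℕ, hE (m+1) * E (n+1) * E (m+n+2)^2
      = ∑' (k:ℕ) (d:ℕ), E (k+1) * (E (n+1) * E ((k+d)+n+2)^2) := by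
    intro n
    have h1 : ∀ m:ℕ, hE (m+1) * E (n+1) * E (m+n+2)^2
        = ∑ k ∈ Finset.range (m+1), E (k+1) * (E (n+1) * E (m+n+2)^2) := by
      intro m
      rw [← Finset.sum_mul, ← hE_sum]
      ring
    rw [tsum_congr h1, ← triangle (fun k m => E (k+1) * (E (n+1) * E (m+n+2)^2))]
  rw [tsum_congr hB]
  have hC : ∀ n k : ℕ, ∑' d:ℕ, E (k+1) * (E (n+1) * E ((k+d)+n+2)^2)
      = E (k+1) * E (n+1) * tTail (k+n+2) := by
    intro n k
    have h1 : ∀ d:ℕ, E (k+1) * (E (n+1) * E ((k+d)+n+2)^2)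
        = (E (k+1) * E (n+1)) * E ((k+n+2)+d)^2 := by
      intro d
      rw [show (k+d)+n+2 = (k+n+2)+d by omega]
      ring
    rw [tsum_congr h1, ENNReal.tsum_mul_left]
    rfl
  have hC' : ∀ n:ℕ, ∑' (k:ℕ) (d:ℕ), E (k+1) * (E (n+1) * E ((k+d)+n+2)^2)
      = ∑' k:ℕ, E (k+1) * E (n+1) * tTail (k+n+2) := by
    intro n; apply tsum_congr; intro k; exact hC n k
  rw [tsum_congr hC', ENNReal.tsum_comm]
  have hD : ∀ k n : ℕ, E (k+1) * E (n+1) * tTail (k+n+2)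
      = E (k+1) * E ((k+n)-k+1) * tTail ((k+n)+2) := by
    intro k n; rw [Nat.add_sub_cancel_left]
  have hD' : ∀ k:ℕ, ∑' n:ℕ, E (k+1) * E (n+1) * tTail (k+n+2)
      = ∑' n:ℕ, E (k+1) * E ((k+n)-k+1) * tTail ((k+n)+2) := by
    intro k; apply tsum_congr; intro n; rw [hD]
  rw [tsum_congr hD', triangle (fun k s => E (k+1) * E (s-k+1) * tTail (s+2))]
  have hE' : ∀ s:ℕ, ∑ k ∈ Finset.range (s+1), E (k+1) * E (s-k+1) * tTail (s+2)
      = 2 * (hE (s+1) * E (s+2)) * tTail (s+2) := by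
    intro s
    rw [← Finset.sum_mul, sum_ADe]
  rw [tsum_congr hE']
  have hF : ∀ s:ℕ, 2 * (hE (s+1) * E (s+2)) * tTail (s+2)
      = ∑' d:ℕ, 2 * (hE (s+1) * E (s+2)) * E ((s+d)+2)^2 := by
    intro s
    rw [ENNReal.tsum_mul_left, tTail]
    congr 1
    apply tsum_congr; intro d
    rw [show (s+2)+d = (s+d)+2 by omega]
  rw [tsum_congr hF, triangle (fun s j => 2 * (hE (s+1) * E (s+2)) * E (j+2)^2)]
  apply tsum_congr; intro j
  rw [← Finset.sum_mul, ← Finset.mul_sum, sum_hE_E2]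
  congr 1
  rw [← ENNReal.ofReal_ofNat, ← ENNReal.ofReal_mul (by norm_num),
    show (2:ℝ) * ((Hr (j+2)^2 - Qr (j+2))/2) = Hr (j+2)^2 - Qr (j+2) by ring]

lemma Hr_sq_sub_Qr_nonneg (j : ℕ) : 0 ≤ Hr (j+2)^2 - Qr (j+2) := by
  have h := FI4 (j+1)
  rw [show j+1+1 = j+2 by omega] at h
  have hs : 0 ≤ ∑ s ∈ Finset.range (j+1), Hr (s+1)/((s:ℝ)+2) :=
    Finset.sum_nonneg (fun i _ => div_nonneg (Hr_nonneg _) (by positivity))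
  linarith

lemma F3 : Zd + SC = SSum := by
  rw [SC_shift, SSum_shift, Zd_eq]
  have h : (∑' j:ℕ, ENNReal.ofReal (Hr (j+2)^2 - Qr (j+2)) * E (j+2)^2)
      + (∑' j:ℕ, qE (j+2) * E (j+2)^2) = ∑' j:ℕ, hE (j+2)^2 * E (j+2)^2 := by
    rw [← ENNReal.tsum_add]
    apply tsum_congr; intro j
    rw [← add_mul, qE, ← ENNReal.ofReal_add (Hr_sq_sub_Qr_nonneg j) (Qr_nonneg _),
      sub_add_cancel, hE, ← ENNReal.ofReal_pow (Hr_nonneg _)]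
  calc (∑' j:ℕ, ENNReal.ofReal (Hr (j+2)^2 - Qr (j+2)) * E (j+2)^2)
      + (1 + ∑' j:ℕ, qE (j+2) * E (j+2)^2)
      = 1 + ((∑' j:ℕ, ENNReal.ofReal (Hr (j+2)^2 - Qr (j+2)) * E (j+2)^2)
        + (∑' j:ℕ, qE (j+2) * E (j+2)^2)) := by ring
    _ = 1 + ∑' j:ℕ, hE (j+2)^2 * E (j+2)^2 := by rw [h]

lemma shiftS : SSum = SS' + 2 * SA' + Z4 := by
  rw [SSum]
  have h : ∀ n:ℕ, hE (n+1)^2 * E (n+1)^2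
      = hE n^2 * E (n+1)^2 + (2 * (hE n * E (n+1)^3) + E (n+1)^4) := by
    intro n; rw [hE_succ]; ring
  rw [tsum_congr h]
  simp only [ENNReal.tsum_add]
  rw [ENNReal.tsum_mul_left]
  simp only [SS', SA', Z4]
  ring

lemma shiftA : SA = SA' + Z4 := by
  rw [SA]
  have h : ∀ n:ℕ, hE (n+1) * E (n+1)^3 = hE n * E (n+1)^3 + E (n+1)^4 := by
    intro n; rw [hE_succ]; ring
  rw [tsum_congr h, ENNReal.tsum_add]
  simp only [SA', Z4]

lemma shiftC : SC = SC' + Z4 := by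
  rw [SC]
  have h : ∀ n:ℕ, qE (n+1) * E (n+1)^2 = qE n * E (n+1)^2 + E (n+1)^4 := by
    intro n; rw [qE_succ]; ring
  rw [tsum_congr h, ENNReal.tsum_add]
  simp only [SC', Z4]


lemma summable_inv_sq : Summable (fun n:ℕ => (1/((n:ℝ)+1))^2) := by
  have h := Real.summable_one_div_nat_pow.mpr (le_refl 2)
  have h2 := (summable_nat_add_iff 1).mpr h
  apply h2.congr; intro n; push_cast; rw [div_pow, one_pow]

lemma Z2_ne_top : Z2 ≠ ⊤ := by
  rw [Z2]
  have h : ∀ n:ℕ, E (n+1)^2 = ENNReal.ofReal ((1/((n:ℝ)+1))^2) := fun n => by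
    rw [E_sh, ← ENNReal.ofReal_pow (by positivity)]
  rw [tsum_congr h, ← ENNReal.ofReal_tsum_of_nonneg (fun n => by positivity) summable_inv_sq]
  exact ENNReal.ofReal_ne_top

lemma sqrt_sqrt_pow4 (x : ℝ) (hx : 0 ≤ x) : (Real.sqrt (Real.sqrt x))^4 = x := by
  have h1 : (Real.sqrt (Real.sqrt x))^4 = ((Real.sqrt (Real.sqrt x))^2)^2 := by ring
  rw [h1, Real.sq_sqrt (Real.sqrt_nonneg x), Real.sq_sqrt hx]

lemma Hr_le_bound : ∀ n:ℕ, 1 ≤ n → Hr n ≤ 4 * Real.sqrt (Real.sqrt n) - 2 := by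
  intro n hn
  induction n, hn using Nat.le_induction with
  | base =>
    rw [Hr_one]
    norm_num [Real.sqrt_one]
  | succ n hn ih =>
    rw [Hr_succ]
    set a := Real.sqrt (Real.sqrt n) with ha
    set b := Real.sqrt (Real.sqrt ((n:ℕ)+1:ℕ)) with hb
    have hcast : (((n:ℕ)+1:ℕ):ℝ) = (n:ℝ)+1 := by push_cast; ring
    have ha4 : a^4 = n := sqrt_sqrt_pow4 _ (Nat.cast_nonneg n)
    have hb4 : b^4 = (n:ℝ)+1 := by
      rw [hb, hcast]; exact sqrt_sqrt_pow4 _ (by positivity)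
    have hab : a ≤ b := by
      rw [ha, hb, hcast]
      exact Real.sqrt_le_sqrt (Real.sqrt_le_sqrt (by linarith))
    have ha0 : 0 ≤ a := Real.sqrt_nonneg _
    have hn1 : (1:ℝ) ≤ (n:ℝ) := by exact_mod_cast hn
    have ha1 : 1 ≤ a := by
      by_contra hc
      push_neg at hc
      have h2 : a^2 < 1 := by nlinarith
      have h4 : a^4 < 1 := by
        nlinarith [mul_pos (by nlinarith : (0:ℝ) < 1 - a^2) (by positivity : (0:ℝ) < 1 + a^2)]
      linarith [ha4 ▸ h4]
    have hb1 : 1 ≤ b := le_trans ha1 hab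
    have key : (b-a)*(b^3+a*b^2+a^2*b+a^3) = 1 := by linear_combination hb4 - ha4
    have hb0 : (0:ℝ) ≤ b := by linarith
    have t1 : a*b^2 ≤ b^3 := by nlinarith [mul_le_mul_of_nonneg_right hab (sq_nonneg b)]
    have ha2b2 : a^2 ≤ b^2 := by nlinarith [hab, ha0]
    have t2 : a^2*b ≤ b^3 := by nlinarith [mul_le_mul_of_nonneg_right ha2b2 hb0]
    have t3 : a^3 ≤ b^3 := pow_le_pow_left₀ ha0 hab 3
    have t4 : b^3 ≤ b^4 := by nlinarith [hb1, pow_nonneg hb0 3]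
    have h4b : b^3+a*b^2+a^2*b+a^3 ≤ 4*b^4 := by linarith
    have hstep : 1/((n:ℝ)+1) ≤ 4*(b-a) := by
      rw [← hb4, div_le_iff₀ (by positivity)]
      nlinarith [key, mul_le_mul_of_nonneg_left h4b (sub_nonneg.mpr hab)]
    have : Hr n ≤ 4*a - 2 := ih
    have hfin : 4*a - 2 + 1/((n:ℝ)+1) ≤ 4*b - 2 := by linarith
    calc Hr n + 1/((n:ℝ)+1) ≤ 4*a - 2 + 1/((n:ℝ)+1) := by linarith
      _ ≤ 4*b - 2 := hfin
      _ = 4 * Real.sqrt (Real.sqrt ((n:ℕ)+1:ℕ)) - 2 := by rw [hb]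

lemma Hr_sq_le (n : ℕ) : Hr (n+1)^2 ≤ 16 * Real.sqrt ((n:ℝ)+1) := by
  have h := Hr_le_bound (n+1) (by omega)
  have hcast : (((n:ℕ)+1:ℕ):ℝ) = (n:ℝ)+1 := by push_cast; ring
  rw [hcast] at h
  set s := Real.sqrt (Real.sqrt ((n:ℝ)+1)) with hs
  have hs2 : s^2 = Real.sqrt ((n:ℝ)+1) := Real.sq_sqrt (Real.sqrt_nonneg _)
  have hs0 : 0 ≤ s := Real.sqrt_nonneg _
  have h0 : 0 ≤ Hr (n+1) := Hr_nonneg _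
  nlinarith [h, h0, hs2, hs0]

lemma w_le_tele (n : ℕ) : 16 * Real.sqrt ((n:ℝ)+1) / ((n:ℝ)+1)^2
    ≤ 64/Real.sqrt ((n:ℝ)+1) - 64/Real.sqrt ((n:ℝ)+2) := by
  set A := Real.sqrt ((n:ℝ)+1) with hA
  set C := Real.sqrt ((n:ℝ)+2) with hC
  have hA2 : A^2 = (n:ℝ)+1 := Real.sq_sqrt (by positivity)
  have hC2 : C^2 = (n:ℝ)+2 := Real.sq_sqrt (by positivity)
  have hA1 : 1 ≤ A := by
    nlinarith [hA2, Real.sqrt_nonneg ((n:ℝ)+1), Nat.cast_nonneg (α := ℝ) n]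
  have hA0 : 0 < A := by linarith
  have hAC : A ≤ C := Real.sqrt_le_sqrt (by linarith)
  have hC0 : 0 < C := by linarith
  have hCle : C ≤ 2*A := by nlinarith [hA2, hC2, hA1, hAC]
  have hkey : (C-A)*(C+A) = 1 := by linear_combination hC2 - hA2
  have hLHS : 16 * A / ((n:ℝ)+1)^2 = 16/A^3 := by
    rw [← hA2]
    rw [div_eq_div_iff (by positivity) (by positivity)]
    ring
  have hRHS : 64/A - 64/C = 64/(A*C*(C+A)) := by
    rw [div_sub_div _ _ (ne_of_gt hA0) (ne_of_gt hC0)]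
    rw [div_eq_div_iff (by positivity) (by positivity)]
    linear_combination (64*A*C) * hkey
  rw [hLHS, hRHS, div_le_div_iff₀ (by positivity) (by positivity)]
  have e1 : A*C^2 ≤ A*(2*A^2) := by nlinarith [hA2, hC2, hA1, hA0.le]
  have e2 : A^2*C ≤ A^2*(2*A) := by nlinarith [hCle, sq_nonneg A, hA0.le]
  nlinarith [e1, e2, hA0.le, hC0.le]

lemma summable_tele : Summable (fun n:ℕ => 64/Real.sqrt ((n:ℝ)+1) - 64/Real.sqrt ((n:ℝ)+2)) := by
  apply summable_of_sum_range_le (c := 64)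
  · intro n
    have h1 : Real.sqrt ((n:ℝ)+1) ≤ Real.sqrt ((n:ℝ)+2) := Real.sqrt_le_sqrt (by linarith)
    have h2 : 0 < Real.sqrt ((n:ℝ)+1) := Real.sqrt_pos.mpr (by positivity)
    have h3 : 0 < Real.sqrt ((n:ℝ)+2) := Real.sqrt_pos.mpr (by positivity)
    rw [sub_nonneg]
    apply div_le_div_of_nonneg_left (by norm_num) h2 h1
  · intro N
    have hid : ∀ i:ℕ, 64/Real.sqrt ((i:ℝ)+1) - 64/Real.sqrt ((i:ℝ)+2)
        = (fun k:ℕ => 64/Real.sqrt ((k:ℝ)+1)) i - (fun k:ℕ => 64/Real.sqrt ((k:ℝ)+1)) (i+1) := by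
      intro i
      simp only
      push_cast
      ring_nf
    rw [Finset.sum_congr rfl (fun i _ => hid i), Finset.sum_range_sub']
    have : 0 ≤ 64/Real.sqrt ((N:ℝ)+1) := by positivity
    simp only [Nat.cast_zero]
    norm_num
    linarith

lemma summable_w : Summable (fun n:ℕ => 16 * Real.sqrt ((n:ℝ)+1) / ((n:ℝ)+1)^2) := by
  apply Summable.of_nonneg_of_le (fun n => by positivity) (fun n => w_le_tele n) summable_tele

lemma SSum_ne_top : SSum ≠ ⊤ := by
  rw [SSum]
  have hterm : ∀ n:ℕ, hE (n+1)^2 * E (n+1)^2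
      ≤ ENNReal.ofReal (16 * Real.sqrt ((n:ℝ)+1) / ((n:ℝ)+1)^2) := by
    intro n
    rw [hE, E_sh, ← ENNReal.ofReal_pow (Hr_nonneg _), ← ENNReal.ofReal_pow (by positivity),
      ← ENNReal.ofReal_mul (by positivity)]
    apply ENNReal.ofReal_le_ofReal
    have h1 : Hr (n+1)^2 ≤ 16 * Real.sqrt ((n:ℝ)+1) := Hr_sq_le n
    have h2 : (0:ℝ) ≤ (1/((n:ℝ)+1))^2 := by positivity
    calc Hr (n+1)^2 * (1/((n:ℝ)+1))^2 ≤ 16 * Real.sqrt ((n:ℝ)+1) * (1/((n:ℝ)+1))^2 :=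
          mul_le_mul_of_nonneg_right h1 h2
      _ = 16 * Real.sqrt ((n:ℝ)+1) / ((n:ℝ)+1)^2 := by
          rw [div_pow, one_pow, mul_one_div]
  have hle := Summable.tsum_le_tsum hterm ENNReal.summable ENNReal.summable
  rw [← ENNReal.ofReal_tsum_of_nonneg (fun n => by positivity) summable_w] at hle
  exact ne_top_of_le_ne_top ENNReal.ofReal_ne_top hle


lemma Z4_le_Z2 : Z4 ≤ Z2 := by
  rw [Z4, Z2]
  apply Summable.tsum_le_tsum _ ENNReal.summable ENNReal.summable
  intro n
  have h1 : E (n+1) ≤ 1 := by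
    rw [E]
    apply ENNReal.inv_le_one.mpr
    exact_mod_cast Nat.one_le_iff_ne_zero.mpr (by omega)
  exact pow_le_pow_of_le_one (by positivity) h1 (by omega)

lemma Z4_ne_top : Z4 ≠ ⊤ := ne_top_of_le_ne_top Z2_ne_top Z4_le_Z2
lemma Z2sq_ne_top : Z2 * Z2 ≠ ⊤ := ENNReal.mul_ne_top Z2_ne_top Z2_ne_top

lemma SA_ne_top : SA ≠ ⊤ := by
  intro h
  have h5 := F5
  rw [h, ENNReal.mul_top (by norm_num)] at h5
  exact Z2sq_ne_top h5

lemma SA'_ne_top : SA' ≠ ⊤ := by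
  apply ne_top_of_le_ne_top SA_ne_top
  rw [shiftA]
  exact le_self_add

lemma SC'_ne_top : SC' ≠ ⊤ := by
  have h1 : SC' ≤ Z2 * Z2 := by
    rw [F6]
    calc SC' = 1 * SC' := (one_mul _).symm
      _ ≤ 2 * SC' := mul_le_mul_left (by norm_num) _
      _ ≤ 2 * SC' + Z4 := le_self_add
  exact ne_top_of_le_ne_top Z2sq_ne_top h1

lemma SC_ne_top : SC ≠ ⊤ := by
  rw [shiftC]
  exact ENNReal.add_ne_top.mpr ⟨SC'_ne_top, Z4_ne_top⟩

lemma SS'_ne_top : SS' ≠ ⊤ := by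
  apply ne_top_of_le_ne_top SSum_ne_top
  rw [shiftS]
  exact le_add_right le_self_add

lemma Pd_ne_top : Pd ≠ ⊤ := by
  apply ne_top_of_le_ne_top SSum_ne_top
  rw [SSum_eq_PZ]
  exact le_self_add

lemma Zd_ne_top : Zd ≠ ⊤ := by
  apply ne_top_of_le_ne_top SSum_ne_top
  rw [SSum_eq_PZ]
  exact le_add_self

lemma twoSA'_ne_top : 2 * SA' ≠ ⊤ := ENNReal.mul_ne_top (by norm_num) SA'_ne_top

lemma main_real : SSum.toReal = 17 * Z4.toReal / 4 := by
  have e1 : SSum.toReal = Pd.toReal + Zd.toReal := by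
    rw [← ENNReal.toReal_add Pd_ne_top Zd_ne_top, ← SSum_eq_PZ]
  have e2 : 2 * Pd.toReal = SS'.toReal + SC'.toReal := by
    have h := congrArg ENNReal.toReal Pd_eq
    rwa [ENNReal.toReal_mul, ENNReal.toReal_add SS'_ne_top SC'_ne_top,
      ENNReal.toReal_ofNat] at h
  have e3 : Zd.toReal + SC.toReal = SSum.toReal := by
    have h := congrArg ENNReal.toReal F3
    rwa [ENNReal.toReal_add Zd_ne_top SC_ne_top] at h
  have e4 : SSum.toReal = SS'.toReal + 2 * SA'.toReal + Z4.toReal := by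
    have h := congrArg ENNReal.toReal shiftS
    rwa [ENNReal.toReal_add (ENNReal.add_ne_top.mpr ⟨SS'_ne_top, twoSA'_ne_top⟩) Z4_ne_top,
      ENNReal.toReal_add SS'_ne_top twoSA'_ne_top, ENNReal.toReal_mul,
      ENNReal.toReal_ofNat] at h
  have e5 : Z2.toReal * Z2.toReal = 2 * SA.toReal := by
    have h := congrArg ENNReal.toReal F5
    rwa [ENNReal.toReal_mul, ENNReal.toReal_mul, ENNReal.toReal_ofNat] at h
  have e6 : Z2.toReal * Z2.toReal = 2 * SC'.toReal + Z4.toReal := by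
    have h := congrArg ENNReal.toReal F6
    rwa [ENNReal.toReal_mul, ENNReal.toReal_add (ENNReal.mul_ne_top (by norm_num) SC'_ne_top)
      Z4_ne_top, ENNReal.toReal_mul, ENNReal.toReal_ofNat] at h
  have e7 : Z2.toReal * Z2.toReal = 2 * SC'.toReal + 4 * SA'.toReal := by
    have h := congrArg ENNReal.toReal F7
    rwa [ENNReal.toReal_mul, ENNReal.toReal_add (ENNReal.mul_ne_top (by norm_num) SC'_ne_top)
      (ENNReal.mul_ne_top (by norm_num) SA'_ne_top), ENNReal.toReal_mul, ENNReal.toReal_mul,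
      ENNReal.toReal_ofNat, ENNReal.toReal_ofNat] at h
  have e8 : SC.toReal = SC'.toReal + Z4.toReal := by
    have h := congrArg ENNReal.toReal shiftC
    rwa [ENNReal.toReal_add SC'_ne_top Z4_ne_top] at h
  have e9 : SA.toReal = SA'.toReal + Z4.toReal := by
    have h := congrArg ENNReal.toReal shiftA
    rwa [ENNReal.toReal_add SA'_ne_top Z4_ne_top] at h
  linarith

lemma hz : (∑' k : ℕ+, 1 / (((k:ℕ):ℝ))^4) = Z4.toReal := by
  rw [Z4, ENNReal.tsum_toReal_eq (fun n => ENNReal.pow_ne_top (Efin n))]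
  rw [← Equiv.tsum_eq Equiv.pnatEquivNat.symm (fun k : ℕ+ => 1 / (((k:ℕ):ℝ))^4)]
  apply tsum_congr; intro n
  have h1 : ((Equiv.pnatEquivNat.symm n : ℕ+) : ℕ) = n+1 := by
    simp [Equiv.pnatEquivNat]
  rw [h1, ENNReal.toReal_pow, E_toReal]
  push_cast
  rw [div_pow, one_pow]

lemma hs : (∑' n : ℕ+, ((∑ k ∈ Finset.Icc 1 (n:ℕ), (1:ℝ)/(k:ℝ)) / ((n:ℕ):ℝ))^2)
    = SSum.toReal := by
  rw [SSum, ENNReal.tsum_toReal_eq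
    (fun n => ENNReal.mul_ne_top (ENNReal.pow_ne_top (hE_ne_top _)) (ENNReal.pow_ne_top (Efin n)))]
  rw [← Equiv.tsum_eq Equiv.pnatEquivNat.symm
    (fun n : ℕ+ => ((∑ k ∈ Finset.Icc 1 (n:ℕ), (1:ℝ)/(k:ℝ)) / ((n:ℕ):ℝ))^2)]
  apply tsum_congr; intro n
  have h1 : ((Equiv.pnatEquivNat.symm n : ℕ+) : ℕ) = n+1 := by
    simp [Equiv.pnatEquivNat]
  rw [h1, ENNReal.toReal_mul, ENNReal.toReal_pow, ENNReal.toReal_pow, E_toReal, hE_toReal]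
  have h2 : (∑ k ∈ Finset.Icc 1 (n+1), (1:ℝ)/(k:ℝ)) = Hr (n+1) := rfl
  rw [h2, div_pow, div_pow, one_pow, ← div_eq_mul_one_div]

end EulerSum17

theorem stmt17 :
    ∑' n : ℕ+, ((∑ k ∈ Finset.Icc 1 (n : ℕ), (1 : ℝ) / (k : ℝ)) / ((n : ℕ) : ℝ)) ^ 2
      = 17 * zetaR 4 / 4 := by
  have hz4 : zetaR 4 = Z4.toReal := hz
  rw [hs, main_real, hz4]
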